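/- Let B be a commutative ring containing ℚ and D a locally nilpotent derivation of B admitting a slice s (i.e., Ds = 1), with kernel A. Then B = A[s], i.e., B is generated as an A-algebra by s. -/
import Mathlib


/-- (Slice theorem, part (a), first half.) If `B` is a commutative ring containing `ℚ`,
`D` a locally nilpotent derivation of `B` with kernel `A`, and `s` a slice (`D s = 1`),
then `B = A[s]`, i.e. `B` is generated as a ring by `A = ker D` together with `s`. -/
theorem stmt4 {B : Type*} [CommRing B] [Algebra ℚ B]
    (D : Derivation ℚ B B)
    (hLND : ∀ b : B, ∃ n : ℕ, (⇑D)^[n] b = 0)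
    (s : B) (hs : D s = 1) :
    Subring.closure ({b : B | D b = 0} ∪ {s}) = ⊤ := by
  set S := Subring.closure ({b : B | D b = 0} ∪ {s}) with hSdef
  have hA : ∀ b : B, D b = 0 → b ∈ S := fun b hb => Subring.subset_closure (Or.inl hb)
  have hsS : s ∈ S := Subring.subset_closure (Or.inr rfl)
  have hQ : ∀ (q : ℚ) (x : B), x ∈ S → q • x ∈ S := by
    intro q x hx
    rw [Algebra.smul_def]
    exact S.mul_mem (hA _ (by simp)) hx
  have key : ∀ n : ℕ, ∀ b : B, (⇑D)^[n] b = 0 →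
      b ∈ S ∧ ∀ k : ℕ, ∃ t ∈ S, D t = s ^ k * b := by
    intro n
    induction n with
    | zero =>
      intro b hb
      simp only [Function.iterate_zero, id_eq] at hb
      subst hb
      exact ⟨S.zero_mem, fun k => ⟨0, S.zero_mem, by simp⟩⟩
    | succ n ih =>
      intro b hb
      rw [Function.iterate_succ_apply] at hb
      obtain ⟨hDbS, hint⟩ := ih (D b) hb
      obtain ⟨u, huS, hu⟩ := hint 0
      have hbu : D (b - u) = 0 := by simp [hu]
      have hbS : b ∈ S := by
        have := S.add_mem (hA _ hbu) huS
        simpa using this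
      refine ⟨hbS, fun k => ?_⟩
      obtain ⟨v, hvS, hv⟩ := hint (k + 1)
      refine ⟨((k + 1 : ℚ)⁻¹) • (s ^ (k + 1) * b - v),
        hQ _ _ (S.sub_mem (S.mul_mem (S.pow_mem hsS _) hbS) hvS), ?_⟩
      have hD1 : D (s ^ (k + 1) * b) = s ^ (k + 1) * D b + (k + 1 : ℕ) • (s ^ k * b) := by
        rw [Derivation.leibniz, Derivation.leibniz_pow, hs]
        simp [smul_smul, mul_comm]
        ring
      rw [Derivation.map_smul, map_sub, hD1, hv]
      have : s ^ (k + 1) * D b + (k + 1 : ℕ) • (s ^ k * b) - s ^ (k + 1) * D b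
          = (k + 1 : ℕ) • (s ^ k * b) := by ring
      rw [this, ← Nat.cast_smul_eq_nsmul ℚ, smul_smul]
      have hne : ((k : ℚ) + 1) ≠ 0 := by positivity
      push_cast
      rw [inv_mul_cancel₀ hne, one_smul]
  rw [eq_top_iff]
  intro b _
  obtain ⟨n, hn⟩ := hLND b
  exact (key n b hn).1
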